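/- Let p be a Wolstenholme prime. Then C(2p-1, p-1) ≡ 1 + 2p·∑_{k=1}^{p-1} 1/k + (2p³/3)·∑_{k=1}^{p-1} 1/k³ (mod p⁷). -/

import Mathlib

open Finset

section Helpers

variable {p : ℕ} [hp : Fact p.Prime]

lemma pnorm_add_le {a b C : ℚ} (ha : padicNorm p a ≤ C) (hb : padicNorm p b ≤ C) :
    padicNorm p (a + b) ≤ C :=
  le_trans padicNorm.nonarchimedean (max_le ha hb)

lemma pnorm_sub_le {a b C : ℚ} (ha : padicNorm p a ≤ C) (hb : padicNorm p b ≤ C) :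
    padicNorm p (a - b) ≤ C :=
  le_trans padicNorm.sub (max_le ha hb)

lemma pnorm_mul_le {a b A B : ℚ} (ha : padicNorm p a ≤ A) (hb : padicNorm p b ≤ B)
    (hA : 0 ≤ A) : padicNorm p (a * b) ≤ A * B := by
  rw [padicNorm.mul]
  exact mul_le_mul ha hb (padicNorm.nonneg b) hA

lemma pnorm_nat_one {n : ℕ} (h1 : 0 < n) (h2 : n < p) : padicNorm p (n : ℚ) = 1 :=
  (padicNorm.nat_eq_one_iff n).2 (Nat.not_dvd_of_pos_of_lt h1 h2)

lemma pnorm_p : padicNorm p ((p:ℚ)) = (p:ℚ)^(-1:ℤ) := by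
  rw [padicNorm.padicNorm_p_of_prime, zpow_neg_one]

lemma pnorm_ppow (n : ℕ) : padicNorm p ((p:ℚ)^n) = (p:ℚ)^(-(n:ℤ)) := by
  have hq0 : (0:ℚ) < (p:ℚ) := by exact_mod_cast hp.out.pos
  induction n with
  | zero => simp [padicNorm.one]
  | succ n ih =>
    rw [pow_succ, padicNorm.mul, ih, pnorm_p, ← zpow_add₀ (ne_of_gt hq0)]
    congr 1
    push_cast
    ring

lemma pnorm_zpow_mono {a b : ℤ} (h : a ≤ b) : (p:ℚ)^a ≤ (p:ℚ)^b := by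
  have hq1 : (1:ℚ) < (p:ℚ) := by exact_mod_cast hp.out.one_lt
  exact zpow_le_zpow_right₀ (le_of_lt hq1) h

lemma pnorm_zpow_pos (a : ℤ) : (0:ℚ) < (p:ℚ)^a := by
  have hq0 : (0:ℚ) < (p:ℚ) := by exact_mod_cast hp.out.pos
  exact zpow_pos hq0 a

/-- Bound for a monomial `c * p^j * x * y`. -/
lemma pnorm_quad {c x y : ℚ} {j : ℕ} {a b e : ℤ}
    (hc : padicNorm p c ≤ 1)
    (hx : padicNorm p x ≤ (p:ℚ)^a) (hy : padicNorm p y ≤ (p:ℚ)^b)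
    (he : -(j:ℤ) + a + b ≤ e) :
    padicNorm p (c * (p:ℚ)^j * x * y) ≤ (p:ℚ)^e := by
  have hq0 : (0:ℚ) < (p:ℚ) := by exact_mod_cast hp.out.pos
  have h1 : padicNorm p (c * (p:ℚ)^j) ≤ 1 * (p:ℚ)^(-(j:ℤ)) :=
    pnorm_mul_le hc (le_of_eq (pnorm_ppow j)) zero_le_one
  have h2 : padicNorm p (c * (p:ℚ)^j * x) ≤ 1 * (p:ℚ)^(-(j:ℤ)) * (p:ℚ)^a :=
    pnorm_mul_le h1 hx (by positivity)
  have h3 : padicNorm p (c * (p:ℚ)^j * x * y) ≤ 1 * (p:ℚ)^(-(j:ℤ)) * (p:ℚ)^a * (p:ℚ)^b :=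
    pnorm_mul_le h2 hy (by positivity)
  calc padicNorm p (c * (p:ℚ)^j * x * y) ≤ 1 * (p:ℚ)^(-(j:ℤ)) * (p:ℚ)^a * (p:ℚ)^b := h3
    _ = (p:ℚ)^(-(j:ℤ) + a + b) := by
        rw [one_mul, ← zpow_add₀ (ne_of_gt hq0), ← zpow_add₀ (ne_of_gt hq0)]
    _ ≤ (p:ℚ)^e := pnorm_zpow_mono he

lemma half_prod (m : ℕ) (g : ℕ → ℚ) :
    ∏ k ∈ Icc 1 (2*m), g k = ∏ k ∈ Icc 1 m, (g k * g (2*m+1 - k)) := by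
  have hsplit : Icc 1 (2*m) = Icc 1 m ∪ Icc (m+1) (2*m) := by
    ext x; simp only [mem_Icc, mem_union]; omega
  have hdisj : Disjoint (Icc 1 m) (Icc (m+1) (2*m)) := by
    rw [Finset.disjoint_left]; intro x hx hx'
    simp only [mem_Icc] at hx hx'; omega
  rw [hsplit, prod_union hdisj, prod_mul_distrib]
  congr 1
  refine prod_nbij' (fun k => 2*m+1-k) (fun k => 2*m+1-k) ?_ ?_ ?_ ?_ ?_
  · intro a ha; simp only [mem_Icc] at ha; (try simp only [mem_Icc]); omega
  · intro a ha; simp only [mem_Icc] at ha; (try simp only [mem_Icc]); omega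
  · intro a ha; simp only [mem_Icc] at ha; (try simp only [mem_Icc]); omega
  · intro a ha; simp only [mem_Icc] at ha; (try simp only [mem_Icc]); omega
  · intro a ha; simp only [mem_Icc] at ha
    congr 1; omega

lemma half_sum (m : ℕ) (g : ℕ → ℚ) :
    ∑ k ∈ Icc 1 (2*m), g k = ∑ k ∈ Icc 1 m, (g k + g (2*m+1 - k)) := by
  have hsplit : Icc 1 (2*m) = Icc 1 m ∪ Icc (m+1) (2*m) := by
    ext x; simp only [mem_Icc, mem_union]; omega
  have hdisj : Disjoint (Icc 1 m) (Icc (m+1) (2*m)) := by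
    rw [Finset.disjoint_left]; intro x hx hx'
    simp only [mem_Icc] at hx hx'; omega
  rw [hsplit, sum_union hdisj, sum_add_distrib]
  congr 1
  refine sum_nbij' (fun k => 2*m+1-k) (fun k => 2*m+1-k) ?_ ?_ ?_ ?_ ?_
  · intro a ha; simp only [mem_Icc] at ha; (try simp only [mem_Icc]); omega
  · intro a ha; simp only [mem_Icc] at ha; (try simp only [mem_Icc]); omega
  · intro a ha; simp only [mem_Icc] at ha; (try simp only [mem_Icc]); omega
  · intro a ha; simp only [mem_Icc] at ha; (try simp only [mem_Icc]); omega
  · intro a ha; simp only [mem_Icc] at ha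
    congr 1; omega

lemma cast_facts {m k : ℕ} (hm : p = 2*m+1) (hk : k ∈ Icc 1 (2*m)) :
    padicNorm p (k:ℚ) = 1 ∧ padicNorm p ((p:ℚ) - k) = 1 ∧ (k:ℚ) ≠ 0 ∧ (p:ℚ) - (k:ℚ) ≠ 0 := by
  simp only [mem_Icc] at hk
  have h1 : padicNorm p (k:ℚ) = 1 := pnorm_nat_one hk.1 (by omega)
  have hcast : ((p - k : ℕ) : ℚ) = (p:ℚ) - k := by
    push_cast [Nat.cast_sub (by omega : k ≤ p)]; ring
  have h2 : padicNorm p ((p:ℚ) - k) = 1 := by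
    rw [← hcast]; exact pnorm_nat_one (by omega) (by omega)
  refine ⟨h1, h2, ?_, ?_⟩
  · intro h; rw [h] at h1; simp [padicNorm.zero] at h1
  · intro h; rw [h] at h2; simp [padicNorm.zero] at h2

lemma fermat_div {k : ℕ} (h1 : 0 < k) (h2 : k < p) :
    padicNorm p (1 - (k:ℚ)^(p-1)) ≤ (p:ℚ)^(-1:ℤ) := by
  have hz : (1 - (k:ℚ)^(p-1)) = -(((k^(p-1) - 1 : ℤ)) : ℚ) := by push_cast; ring
  rw [hz, padicNorm.neg]
  have : ((p^1 : ℕ) : ℤ) ∣ ((k:ℤ)^(p-1) - 1) := by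
    rw [pow_one]
    have hk0 : ((k:ℕ) : ZMod p) ≠ 0 := by
      rw [Ne, ZMod.natCast_eq_zero_iff]
      exact Nat.not_dvd_of_pos_of_lt h1 h2
    have h0 : (((k:ℤ)^(p-1) - 1 : ℤ) : ZMod p) = 0 := by
      push_cast
      rw [ZMod.pow_card_sub_one_eq_one hk0]
      ring
    exact (ZMod.intCast_zmod_eq_zero_iff_dvd _ p).1 h0
  have := (padicNorm.dvd_iff_norm_le (p := p) (n := 1) (z := (k:ℤ)^(p-1) - 1)).1 this
  simpa using this

lemma power_sum_div (t : ℕ) (ht : 0 < t) (ht' : t < p - 1) :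
    padicNorm p (∑ k ∈ Icc 1 (p-1), (k:ℚ)^t) ≤ (p:ℚ)^(-1:ℤ) := by
  have hN : (∑ k ∈ Icc 1 (p-1), (k:ℚ)^t) = ((∑ k ∈ Icc 1 (p-1), k^t : ℕ) : ℚ) := by
    push_cast; ring
  set N : ℕ := ∑ k ∈ Icc 1 (p-1), k^t with hNdef
  have hdvd : p ∣ N := by
    rw [← ZMod.natCast_eq_zero_iff]
    have hcast : ((N : ℕ) : ZMod p) = ∑ k ∈ Icc 1 (p-1), (k : ZMod p)^t := by
      rw [hNdef]; push_cast; ring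
    rw [hcast]
    have hins : (range p) = insert 0 (Icc 1 (p-1)) := by
      ext x; simp only [mem_range, mem_insert, mem_Icc]
      have := hp.out.two_le; omega
    have hsplit : ∑ k ∈ range p, ((k : ZMod p))^t
        = (0:ZMod p)^t + ∑ k ∈ Icc 1 (p-1), (k : ZMod p)^t := by
      rw [hins, sum_insert (by simp)]
      norm_num
    have hbij : ∑ k ∈ range p, ((k : ZMod p))^t = ∑ x : ZMod p, x^t := by
      refine Finset.sum_nbij' (fun k => (k : ZMod p)) (fun x => x.val) ?_ ?_ ?_ ?_ ?_
      · intro a _; exact mem_univ _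
      · intro x _
        simp only [mem_range]
        exact ZMod.val_lt x
      · intro a ha
        simp only [mem_range] at ha
        exact ZMod.val_cast_of_lt ha
      · intro x _
        exact ZMod.natCast_rightInverse x
      · intro a _; rfl
    have hfield : ∑ x : ZMod p, x^t = 0 := by
      have hcard : Fintype.card (ZMod p) = p := ZMod.card p
      exact FiniteField.sum_pow_lt_card_sub_one (ZMod p) t (by rw [hcard]; exact ht')
    have hz : (0:ZMod p)^t = 0 := zero_pow (by omega)
    have := hsplit.symm.trans hbij
    rw [hz, zero_add] at this
    rw [this, hfield]
  rw [hN]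
  have : ((p^1 : ℕ) : ℤ) ∣ (N : ℤ) := by
    rw [pow_one]; exact_mod_cast Int.natCast_dvd_natCast.2 hdvd
  have := (padicNorm.dvd_iff_norm_le (p := p) (n := 1) (z := (N:ℤ))).1 this
  simpa using this

lemma s3_bound (m : ℕ) (hm : p = 2*m+1) (hp11 : 11 ≤ p) :
    padicNorm p (∑ k ∈ Icc 1 m, (1/((k:ℚ)*((p:ℚ)-k)))^3) ≤ (p:ℚ)^(-1:ℤ) := by
  have hq1 : (1:ℚ) < (p:ℚ) := by exact_mod_cast hp.out.one_lt
  have hq0 : (0:ℚ) < (p:ℚ) := lt_trans one_pos hq1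
  set g : ℕ → ℚ := fun k => (1/((k:ℚ)*((p:ℚ)-k)))^3 with hg
  have hdouble : ∑ k ∈ Icc 1 (2*m), g k = 2 * ∑ k ∈ Icc 1 m, g k := by
    rw [half_sum m g, mul_sum]
    refine sum_congr rfl (fun k hk => ?_)
    simp only [mem_Icc] at hk
    have hc1 : ((2*m+1-k:ℕ):ℚ) = (p:ℚ) - (k:ℚ) := by
      rw [Nat.cast_sub (by omega : k ≤ 2*m+1), hm]; try push_cast; try ring
    rw [hg]
    dsimp only
    rw [hc1]
    ring
  have h2norm : padicNorm p (2:ℚ) = 1 := by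
    have := pnorm_nat_one (p := p) (n := 2) (by norm_num) (by omega)
    exact_mod_cast this
  have hWnorm : padicNorm p (∑ k ∈ Icc 1 (2*m), g k)
      = padicNorm p (∑ k ∈ Icc 1 m, g k) := by
    rw [hdouble, padicNorm.mul, h2norm, one_mul]
  rw [← hWnorm]
  set t : ℕ := p - 7 with ht
  have hW : ∑ k ∈ Icc 1 (2*m), g k
      = (∑ k ∈ Icc 1 (2*m), (g k + 1/(k:ℚ)^6))
        - (∑ k ∈ Icc 1 (2*m), (1/(k:ℚ)^6 - (k:ℚ)^t))
        - (∑ k ∈ Icc 1 (2*m), (k:ℚ)^t) := by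
    rw [← sum_sub_distrib, ← sum_sub_distrib]
    exact sum_congr rfl (fun k _ => by ring)
  rw [hW]
  refine pnorm_sub_le (pnorm_sub_le ?_ ?_) ?_
  · refine padicNorm.sum_le' (fun k hk => ?_) (le_of_lt (zpow_pos hq0 _))
    obtain ⟨h1, h2, h3, h4⟩ := cast_facts hm hk
    set a := (k:ℚ)
    set b := (p:ℚ) - a with hb
    have key : g k + 1/a^6 = ((p:ℚ) * ((p:ℚ)^2 - 3*(a*b))) * (1/(a^6*b^3)) := by
      rw [hg]; dsimp only; rw [← hb]
      have h3'' : (k:ℚ) ≠ 0 := h3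
      field_simp
      ring
    have hab : padicNorm p (a^6*b^3) = 1 := by
      rw [show a^6*b^3 = a*(a*(a*(a*(a*(a*(b*(b*b))))))) by ring]
      simp only [padicNorm.mul, h1, h2, one_mul]
    have habinv : padicNorm p (1/(a^6*b^3)) ≤ 1 := by
      rw [padicNorm.div, padicNorm.one, hab]
      norm_num
    have hz : (p:ℚ)^2 - 3*(a*b) = (((p:ℤ)^2 - 3*(k:ℤ)*((p:ℤ)-(k:ℤ)) : ℤ) : ℚ) := by
      rw [hb]; push_cast; ring
    have hzn : padicNorm p ((p:ℚ)^2 - 3*(a*b)) ≤ 1 := by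
      rw [hz]; exact padicNorm.of_int _
    have hpn : padicNorm p ((p:ℚ)) ≤ (p:ℚ)^(-1:ℤ) := le_of_eq pnorm_p
    have h5 := pnorm_mul_le hpn hzn (le_of_lt (zpow_pos hq0 _))
    have h6 := pnorm_mul_le h5 habinv (by positivity)
    rw [key]
    calc padicNorm p _ ≤ ((p:ℚ)^(-1:ℤ) * 1) * 1 := h6
      _ = (p:ℚ)^(-1:ℤ) := by ring
  · refine padicNorm.sum_le' (fun k hk => ?_) (le_of_lt (zpow_pos hq0 _))
    obtain ⟨h1, h2, h3, h4⟩ := cast_facts hm hk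
    simp only [mem_Icc] at hk
    set a := (k:ℚ)
    have key : 1/a^6 - a^t = (1 - a^(p-1)) * (1/a^6) := by
      have hpow : a^(p-1) = a^t * a^6 := by
        rw [← pow_add]; congr 1; omega
      rw [hpow]; field_simp
    rw [key]
    have hf := fermat_div (p := p) hk.1 (by omega)
    have hinv : padicNorm p (1/a^6) ≤ 1 := by
      rw [padicNorm.div, padicNorm.one,
        show a^6 = a*(a*(a*(a*(a*a)))) by ring]
      simp only [padicNorm.mul, h1, one_mul]
      norm_num
    have := pnorm_mul_le hf hinv (le_of_lt (zpow_pos hq0 _))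
    calc padicNorm p _ ≤ (p:ℚ)^(-1:ℤ) * 1 := this
      _ = (p:ℚ)^(-1:ℤ) := by ring
  · have h2m : 2*m = p - 1 := by omega
    rw [h2m]
    exact power_sum_div t (by omega) (by omega)

/-- Cubic truncation of the product `∏ (1 + f i)` with error `O(p^8)`. -/
lemma trunc (hp5 : 5 ≤ p) {ι : Type} (s : Finset ι) (f : ι → ℚ)
    (hf : ∀ i ∈ s, padicNorm p (f i) ≤ (p:ℚ)^(-2:ℤ)) :
    padicNorm p (∏ i ∈ s, (1 + f i) -
      (1 + (∑ i ∈ s, f i) + ((∑ i ∈ s, f i)^2 - ∑ i ∈ s, (f i)^2)/2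
       + ((∑ i ∈ s, f i)^3 - 3*(∑ i ∈ s, f i)*(∑ i ∈ s, (f i)^2)
          + 2*∑ i ∈ s, (f i)^3)/6))
      ≤ (p:ℚ)^(-8:ℤ) := by
  classical
  have hq1 : (1:ℚ) < (p:ℚ) := by exact_mod_cast hp.out.one_lt
  have hq0 : (0:ℚ) < (p:ℚ) := lt_trans one_pos hq1
  have hmono : ∀ a b : ℤ, a ≤ b → (p:ℚ)^a ≤ (p:ℚ)^b := fun a b h =>
    zpow_le_zpow_right₀ (le_of_lt hq1) h
  have hpos : ∀ a : ℤ, (0:ℚ) < (p:ℚ)^a := fun a => zpow_pos hq0 a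
  have h6 : padicNorm p (6:ℚ) = 1 := by
    have : ¬ p ∣ 6 := by
      intro h; have h6 := Nat.le_of_dvd (by norm_num) h
      interval_cases p <;> first | omega | exact (by norm_num : ¬ Nat.Prime 6) hp.out
    have := (padicNorm.nat_eq_one_iff (p := p) 6).2 this
    exact_mod_cast this
  induction s using Finset.induction_on with
  | empty => simpa using le_of_lt (hpos (-8))
  | @insert a s ha' ih =>
    have hfs : ∀ i ∈ s, padicNorm p (f i) ≤ (p:ℚ)^(-2:ℤ) := fun i hi =>
      hf i (mem_insert_of_mem hi)
    have hx : padicNorm p (f a) ≤ (p:ℚ)^(-2:ℤ) := hf a (mem_insert_self a s)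
    have hS1 : padicNorm p (∑ i ∈ s, f i) ≤ (p:ℚ)^(-2:ℤ) :=
      padicNorm.sum_le' hfs (le_of_lt (hpos _))
    have hS2 : padicNorm p (∑ i ∈ s, (f i)^2) ≤ (p:ℚ)^(-4:ℤ) := by
      refine padicNorm.sum_le' (fun i hi => ?_) (le_of_lt (hpos _))
      have := pnorm_mul_le (hfs i hi) (hfs i hi) (le_of_lt (hpos _))
      rw [← zpow_add₀ (ne_of_gt hq0)] at this
      simpa [sq] using this
    have hS3 : padicNorm p (∑ i ∈ s, (f i)^3) ≤ (p:ℚ)^(-6:ℤ) := by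
      refine padicNorm.sum_le' (fun i hi => ?_) (le_of_lt (hpos _))
      have h2 : padicNorm p ((f i)*(f i)) ≤ (p:ℚ)^(-2:ℤ) * (p:ℚ)^(-2:ℤ) :=
        pnorm_mul_le (hfs i hi) (hfs i hi) (le_of_lt (hpos _))
      have h3 : padicNorm p ((f i)*((f i)*(f i))) ≤ (p:ℚ)^(-2:ℤ) * ((p:ℚ)^(-2:ℤ) * (p:ℚ)^(-2:ℤ)) :=
        pnorm_mul_le (hfs i hi) h2 (le_of_lt (hpos _))
      rw [← zpow_add₀ (ne_of_gt hq0), ← zpow_add₀ (ne_of_gt hq0)] at h3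
      calc padicNorm p ((f i)^3) = padicNorm p ((f i)*((f i)*(f i))) := by ring_nf
        _ ≤ _ := h3
        _ ≤ (p:ℚ)^(-6:ℤ) := by norm_num
    set S1 := ∑ i ∈ s, f i
    set S2 := ∑ i ∈ s, (f i)^2
    set S3 := ∑ i ∈ s, (f i)^3
    set x := f a
    set Pi := ∏ i ∈ s, (1 + f i)
    set G := 1 + S1 + (S1^2 - S2)/2 + (S1^3 - 3*S1*S2 + 2*S3)/6 with hG
    set e3 := (S1^3 - 3*S1*S2 + 2*S3)/6 with he3
    have key : ∏ i ∈ insert a s, (1 + f i) -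
        (1 + (∑ i ∈ insert a s, f i) +
         ((∑ i ∈ insert a s, f i)^2 - ∑ i ∈ insert a s, (f i)^2)/2 +
         ((∑ i ∈ insert a s, f i)^3
           - 3*(∑ i ∈ insert a s, f i)*(∑ i ∈ insert a s, (f i)^2)
           + 2*∑ i ∈ insert a s, (f i)^3)/6)
        = (1 + x) * (Pi - G) + x * e3 := by
      rw [prod_insert ha', sum_insert ha', sum_insert ha', sum_insert ha']
      rw [hG, he3]; ring
    rw [key]
    have he3n : padicNorm p e3 ≤ (p:ℚ)^(-6:ℤ) := by
      rw [he3, padicNorm.div, h6, div_one]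
      refine pnorm_add_le (pnorm_sub_le ?_ ?_) ?_
      · have h2 : padicNorm p (S1*S1) ≤ (p:ℚ)^(-2:ℤ) * (p:ℚ)^(-2:ℤ) :=
          pnorm_mul_le hS1 hS1 (le_of_lt (hpos _))
        have h3 : padicNorm p (S1*(S1*S1)) ≤ (p:ℚ)^(-2:ℤ) * ((p:ℚ)^(-2:ℤ) * (p:ℚ)^(-2:ℤ)) :=
          pnorm_mul_le hS1 h2 (le_of_lt (hpos _))
        rw [← zpow_add₀ (ne_of_gt hq0), ← zpow_add₀ (ne_of_gt hq0)] at h3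
        calc padicNorm p (S1^3) = padicNorm p (S1*(S1*S1)) := by ring_nf
          _ ≤ _ := h3
          _ ≤ (p:ℚ)^(-6:ℤ) := by norm_num
      · have h3n : padicNorm p (3:ℚ) ≤ 1 := by exact_mod_cast padicNorm.of_nat (p := p) 3
        have h12 : padicNorm p (S1*S2) ≤ (p:ℚ)^(-2:ℤ) * (p:ℚ)^(-4:ℤ) :=
          pnorm_mul_le hS1 hS2 (le_of_lt (hpos _))
        have := pnorm_mul_le h3n h12 zero_le_one
        rw [one_mul, ← zpow_add₀ (ne_of_gt hq0)] at this
        calc padicNorm p (3*S1*S2) = padicNorm p (3*(S1*S2)) := by ring_nf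
          _ ≤ _ := this
          _ ≤ (p:ℚ)^(-6:ℤ) := by norm_num
      · have h2n : padicNorm p (2:ℚ) ≤ 1 := by exact_mod_cast padicNorm.of_nat (p := p) 2
        have := pnorm_mul_le h2n hS3 zero_le_one
        rw [one_mul] at this
        exact this
    refine pnorm_add_le ?_ ?_
    · have h1x : padicNorm p (1 + x) ≤ 1 := by
        refine pnorm_add_le (le_of_eq padicNorm.one) (le_trans hx ?_)
        calc (p:ℚ)^(-2:ℤ) ≤ (p:ℚ)^(0:ℤ) := hmono _ _ (by norm_num)
          _ = 1 := zpow_zero _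
      have := pnorm_mul_le h1x (ih hfs) zero_le_one
      rw [one_mul] at this
      exact this
    · have := pnorm_mul_le hx he3n (le_of_lt (hpos _))
      rw [← zpow_add₀ (ne_of_gt hq0)] at this
      calc padicNorm p (x*e3) ≤ _ := this
        _ ≤ (p:ℚ)^(-8:ℤ) := by norm_num

lemma choose_prod (n m : ℕ) : ((n+m).choose m : ℚ) = ∏ k ∈ Icc 1 m, ((n+k : ℚ)/(k:ℚ)) := by
  induction m with
  | zero => simp
  | succ m ih =>
    rw [show n + (m+1) = (n+m)+1 by omega, prod_Icc_succ_top (Nat.le_add_left 1 m), ← ih]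
    have h := Nat.add_one_mul_choose_eq (n+m) m
    have hc : ((n+m+1) * ((n+m).choose m) : ℚ) = ((n+m+1).choose (m+1)) * (m+1) := by
      exact_mod_cast congrArg (Nat.cast : ℕ → ℚ) h
    have hm : ((m:ℚ)+1) ≠ 0 := by positivity
    push_cast
    push_cast at hc
    field_simp
    linarith [hc]

end Helpers

/-- `a ≡ b (mod p^n)` in the `p`-adic sense for rationals. -/
def PadicCong (p : ℕ) (n : ℕ) (a b : ℚ) : Prop :=
  padicNorm p (a - b) ≤ (p : ℚ) ^ (-(n : ℤ))

theorem stmt12 (p : ℕ) (hp : p.Prime)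
    (hw : PadicCong p 4 ((Nat.choose (2 * p - 1) (p - 1)) : ℚ) 1) :
    PadicCong p 7 ((Nat.choose (2 * p - 1) (p - 1)) : ℚ)
      (1 + 2 * (p : ℚ) * (∑ k ∈ Finset.Icc 1 (p - 1), (1 : ℚ) / (k : ℚ)) + 2 * (p : ℚ) ^ 3 / 3 * (∑ k ∈ Finset.Icc 1 (p - 1), (1 : ℚ) / (k : ℚ) ^ 3)) := by
  haveI hfact : Fact p.Prime := ⟨hp⟩
  rw [PadicCong] at hw ⊢
  have hw4 : padicNorm p (((2*p-1).choose (p-1) : ℚ) - 1) ≤ (p:ℚ)^(-4:ℤ) := by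
    convert hw using 3
    try norm_num
  -- exclude small primes
  have hp11 : 11 ≤ p := by
    by_contra hcon
    push_neg at hcon
    have h2 := hp.two_le
    have hdvd : ((p^4 : ℕ) : ℤ) ∣ (((2*p-1).choose (p-1) : ℤ) - 1) := by
      refine (padicNorm.dvd_iff_norm_le (p := p)).2 ?_
      have hcast : ((((2*p-1).choose (p-1) : ℤ) - 1 : ℤ) : ℚ)
          = (((2*p-1).choose (p-1) : ℚ) - 1) := by push_cast; ring
      rw [hcast]
      convert hw4 using 2
      try norm_num
    interval_cases p <;>
      first
        | (simp only [show (2*2-1).choose (2-1) = 3 by rfl] at hdvd; norm_num at hdvd)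
        | (simp only [show (2*3-1).choose (3-1) = 10 by rfl] at hdvd; norm_num at hdvd)
        | (simp only [show (2*5-1).choose (5-1) = 126 by rfl] at hdvd; norm_num at hdvd)
        | (simp only [show (2*7-1).choose (7-1) = 1716 by rfl] at hdvd; norm_num at hdvd)
        | (norm_num at hp)
  obtain ⟨m, hm⟩ : ∃ m, p = 2*m+1 := by
    obtain ⟨j, hj⟩ := hp.odd_of_ne_two (by omega)
    exact ⟨j, by omega⟩
  have hq1 : (1:ℚ) < (p:ℚ) := by exact_mod_cast hp.one_lt
  have hq0 : (0:ℚ) < (p:ℚ) := lt_trans one_pos hq1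
  -- definitions
  set q : ℕ → ℚ := fun k => 1/((k:ℚ)*((p:ℚ)-k)) with hqdef
  set f : ℕ → ℚ := fun k => 2*(p:ℚ)^2 * q k with hfdef
  set s1 : ℚ := ∑ k ∈ Finset.Icc 1 m, q k with hs1def
  set s2 : ℚ := ∑ k ∈ Finset.Icc 1 m, (q k)^2 with hs2def
  set s3 : ℚ := ∑ k ∈ Finset.Icc 1 m, (q k)^3 with hs3def
  -- basic norm facts about q
  have hqnorm : ∀ k ∈ Finset.Icc 1 (2*m), padicNorm p (q k) = 1 := by
    intro k hk
    obtain ⟨h1, h2, _, _⟩ := cast_facts hm hk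
    rw [hqdef]
    dsimp only
    rw [padicNorm.div, padicNorm.one, padicNorm.mul, h1, h2]
    norm_num
  have hsubset : ∀ k ∈ Finset.Icc 1 m, k ∈ Finset.Icc 1 (2*m) := by
    intro k hk; simp only [Finset.mem_Icc] at *; omega
  have h2norm : padicNorm p (2:ℚ) ≤ 1 := by exact_mod_cast padicNorm.of_nat (p := p) 2
  have h3norm : padicNorm p (3:ℚ) = 1 := by
    have := pnorm_nat_one (p := p) (n := 3) (by norm_num) (by omega)
    exact_mod_cast this
  have h43 : padicNorm p (4/3 : ℚ) ≤ 1 := by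
    rw [padicNorm.div, h3norm, div_one]
    exact_mod_cast padicNorm.of_nat (p := p) 4
  have h83 : padicNorm p (8/3 : ℚ) ≤ 1 := by
    rw [padicNorm.div, h3norm, div_one]
    exact_mod_cast padicNorm.of_nat (p := p) 8
  have h4norm : padicNorm p (4:ℚ) ≤ 1 := by exact_mod_cast padicNorm.of_nat (p := p) 4
  -- s bounds (trivial ones)
  have hs1_0 : padicNorm p s1 ≤ (p:ℚ)^(0:ℤ) := by
    rw [hs1def, zpow_zero]
    exact padicNorm.sum_le' (fun k hk => le_of_eq (hqnorm k (hsubset k hk))) zero_le_one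
  have hs2_0 : padicNorm p s2 ≤ (p:ℚ)^(0:ℤ) := by
    rw [hs2def, zpow_zero]
    refine padicNorm.sum_le' (fun k hk => ?_) zero_le_one
    rw [sq, padicNorm.mul, hqnorm k (hsubset k hk), one_mul]
  have hs3_0 : padicNorm p s3 ≤ (p:ℚ)^(0:ℤ) := by
    rw [hs3def, zpow_zero]
    refine padicNorm.sum_le' (fun k hk => ?_) zero_le_one
    rw [show (q k)^3 = q k * (q k * q k) by ring, padicNorm.mul, padicNorm.mul,
      hqnorm k (hsubset k hk)]
    norm_num
  have hs3_1 : padicNorm p s3 ≤ (p:ℚ)^(-1:ℤ) := by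
    rw [hs3def]
    exact s3_bound m hm hp11
  -- f bounds
  have hone : padicNorm p (1:ℚ) ≤ (p:ℚ)^(0:ℤ) := by
    rw [padicNorm.one, zpow_zero]
  have hqle : ∀ k ∈ Finset.Icc 1 m, padicNorm p (q k) ≤ (p:ℚ)^(0:ℤ) := by
    intro k hk
    rw [zpow_zero]
    exact le_of_eq (hqnorm k (hsubset k hk))
  have hf : ∀ k ∈ Finset.Icc 1 m, padicNorm p (f k) ≤ (p:ℚ)^(-2:ℤ) := by
    intro k hk
    rw [hfdef]
    dsimp only
    rw [show 2*(p:ℚ)^2 * q k = 2 * (p:ℚ)^(2:ℕ) * q k * 1 by ring]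
    exact pnorm_quad h2norm (hqle k hk) hone (by norm_num)
  have h2eq : padicNorm p (2:ℚ) = 1 := by
    have := pnorm_nat_one (p := p) (n := 2) (by norm_num) (by omega)
    exact_mod_cast this
  -- apply the truncation lemma
  have htr := trunc (p := p) (by omega) (Finset.Icc 1 m) f hf
  set F1 : ℚ := ∑ k ∈ Finset.Icc 1 m, f k with hF1def
  set F2 : ℚ := ∑ k ∈ Finset.Icc 1 m, (f k)^2 with hF2def
  set F3 : ℚ := ∑ k ∈ Finset.Icc 1 m, (f k)^3 with hF3def
  set PG : ℚ := ∏ k ∈ Finset.Icc 1 m, (1 + f k) with hPGdef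
  -- express the F sums via s sums
  have hF1eq : F1 = 2*(p:ℚ)^2*s1 := by
    rw [hF1def, hs1def, Finset.mul_sum]
    try refine Finset.sum_congr rfl (fun k hk => ?_)
    try simp only [hfdef]
    try ring
  have hF2eq : F2 = 4*(p:ℚ)^4*s2 := by
    rw [hF2def, hs2def, Finset.mul_sum]
    refine Finset.sum_congr rfl (fun k hk => ?_)
    simp only [hfdef]
    ring
  have hF3eq : F3 = 8*(p:ℚ)^6*s3 := by
    rw [hF3def, hs3def, Finset.mul_sum]
    refine Finset.sum_congr rfl (fun k hk => ?_)
    simp only [hfdef]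
    ring
  -- the binomial coefficient as a product
  have hCfull : (((2*p-1).choose (p-1) : ℕ) : ℚ) = PG := by
    have e1 : (((2*p-1).choose (p-1) : ℕ) : ℚ) = ∏ k ∈ Finset.Icc 1 (2*m), (((p:ℚ)+(k:ℚ))/(k:ℚ)) := by
      rw [show 2*p-1 = p+(2*m) by omega, show p-1 = 2*m by omega]
      exact choose_prod p (2*m)
    rw [e1, half_prod m (fun k => ((p:ℚ)+(k:ℚ))/(k:ℚ)), hPGdef]
    refine Finset.prod_congr rfl (fun k hk => ?_)
    obtain ⟨h1, h2, h3, h4⟩ := cast_facts hm (hsubset k hk)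
    have hc1 : ((2*m+1-k:ℕ):ℚ) = (p:ℚ) - (k:ℚ) := by
      simp only [Finset.mem_Icc] at hk
      rw [Nat.cast_sub (by omega : k ≤ 2*m+1), hm]
      try push_cast
      try ring
    rw [hc1]
    simp only [hfdef, hqdef]
    field_simp
    try ring
  -- harmonic sum identities
  have hH : (∑ k ∈ Finset.Icc 1 (p-1), (1:ℚ)/(k:ℚ)) = (p:ℚ) * s1 := by
    rw [show p-1 = 2*m by omega, half_sum m (fun k => (1:ℚ)/(k:ℚ)), hs1def, Finset.mul_sum]
    refine Finset.sum_congr rfl (fun k hk => ?_)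
    obtain ⟨h1, h2, h3, h4⟩ := cast_facts hm (hsubset k hk)
    have hc1 : ((2*m+1-k:ℕ):ℚ) = (p:ℚ) - (k:ℚ) := by
      simp only [Finset.mem_Icc] at hk
      rw [Nat.cast_sub (by omega : k ≤ 2*m+1), hm]
      try push_cast
      try ring
    rw [hc1]
    simp only [hqdef]
    field_simp
    try ring
  have hP3 : (∑ k ∈ Finset.Icc 1 (p-1), (1:ℚ)/(k:ℚ)^3) = (p:ℚ)^3 * s3 - 3*(p:ℚ)*s2 := by
    rw [show p-1 = 2*m by omega, half_sum m (fun k => (1:ℚ)/(k:ℚ)^3), hs3def, hs2def,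
      Finset.mul_sum, Finset.mul_sum, ← Finset.sum_sub_distrib]
    refine Finset.sum_congr rfl (fun k hk => ?_)
    obtain ⟨h1, h2, h3, h4⟩ := cast_facts hm (hsubset k hk)
    have hc1 : ((2*m+1-k:ℕ):ℚ) = (p:ℚ) - (k:ℚ) := by
      simp only [Finset.mem_Icc] at hk
      rw [Nat.cast_sub (by omega : k ≤ 2*m+1), hm]
      try push_cast
      try ring
    rw [hc1]
    simp only [hqdef]
    field_simp
    try ring
  -- refined bound on s1 from the Wolstenholme hypothesis
  have hs11_0 : padicNorm p (s1*s1) ≤ (p:ℚ)^(0:ℤ) := by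
    have := pnorm_mul_le hs1_0 hs1_0 (le_of_lt (pnorm_zpow_pos (p := p) _))
    rwa [← zpow_add₀ (ne_of_gt hq0), show (0:ℤ)+0 = 0 by norm_num] at this
  have hX : padicNorm p (2*(p:ℚ)^4*s1*s1 - 2*(p:ℚ)^4*s2*1 + (4/3)*(p:ℚ)^6*(s1*s1)*s1
      - 4*(p:ℚ)^6*s1*s2 + (8/3)*(p:ℚ)^6*s3*1) ≤ (p:ℚ)^(-4:ℤ) := by
    refine pnorm_add_le (pnorm_sub_le (pnorm_add_le (pnorm_sub_le ?_ ?_) ?_) ?_) ?_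
    · exact pnorm_quad h2norm hs1_0 hs1_0 (by norm_num)
    · exact pnorm_quad h2norm hs2_0 hone (by norm_num)
    · exact pnorm_quad h43 hs11_0 hs1_0 (by norm_num)
    · exact pnorm_quad h4norm hs1_0 hs2_0 (by norm_num)
    · exact pnorm_quad h83 hs3_0 hone (by norm_num)
  have hE4 : padicNorm p (PG - (1 + F1 + (F1^2 - F2)/2 + (F1^3 - 3*F1*F2 + 2*F3)/6))
      ≤ (p:ℚ)^(-4:ℤ) := le_trans htr (pnorm_zpow_mono (by norm_num))
  have key2 : 2*(p:ℚ)^2*s1*1 = ((((2*p-1).choose (p-1) : ℕ) : ℚ) - 1)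
      - (PG - (1 + F1 + (F1^2 - F2)/2 + (F1^3 - 3*F1*F2 + 2*F3)/6))
      - (2*(p:ℚ)^4*s1*s1 - 2*(p:ℚ)^4*s2*1 + (4/3)*(p:ℚ)^6*(s1*s1)*s1
         - 4*(p:ℚ)^6*s1*s2 + (8/3)*(p:ℚ)^6*s3*1) := by
    rw [hCfull, hF1eq, hF2eq, hF3eq]
    ring
  have h2s1 : padicNorm p (2*(p:ℚ)^2*s1*1) ≤ (p:ℚ)^(-4:ℤ) := by
    rw [key2]
    exact pnorm_sub_le (pnorm_sub_le hw4 hE4) hX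
  have hs1_2 : padicNorm p s1 ≤ (p:ℚ)^(-2:ℤ) := by
    have heq : padicNorm p (2*(p:ℚ)^2*s1*1) = (p:ℚ)^(-2:ℤ) * padicNorm p s1 := by
      rw [mul_one, padicNorm.mul, padicNorm.mul, h2eq, one_mul, pnorm_ppow 2]
      norm_num
    rw [heq] at h2s1
    have hp2 : (0:ℚ) < (p:ℚ)^(-2:ℤ) := pnorm_zpow_pos _
    rw [mul_comm] at h2s1
    have := (le_div_iff₀ hp2).2 h2s1
    calc padicNorm p s1 ≤ (p:ℚ)^(-4:ℤ) / (p:ℚ)^(-2:ℤ) := this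
      _ = (p:ℚ)^(-2:ℤ) := by
          rw [← zpow_sub₀ (ne_of_gt hq0)]
          norm_num
  have hs11_2 : padicNorm p (s1*s1) ≤ (p:ℚ)^(-4:ℤ) := by
    have := pnorm_mul_le hs1_2 hs1_2 (le_of_lt (pnorm_zpow_pos (p := p) _))
    rwa [← zpow_add₀ (ne_of_gt hq0), show (-2:ℤ)+(-2) = -4 by norm_num] at this
  -- final difference bound
  have hD : padicNorm p (2*(p:ℚ)^4*s1*s1 + (4/3)*(p:ℚ)^6*(s1*s1)*s1
      - 4*(p:ℚ)^6*s1*s2 + 2*(p:ℚ)^6*s3*1) ≤ (p:ℚ)^(-7:ℤ) := by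
    refine pnorm_add_le (pnorm_sub_le (pnorm_add_le ?_ ?_) ?_) ?_
    · exact pnorm_quad h2norm hs1_2 hs1_2 (by norm_num)
    · exact pnorm_quad h43 hs11_2 hs1_2 (by norm_num)
    · exact pnorm_quad h4norm hs1_2 hs2_0 (by norm_num)
    · exact pnorm_quad h2norm hs3_1 hone (by norm_num)
  have hE7 : padicNorm p (PG - (1 + F1 + (F1^2 - F2)/2 + (F1^3 - 3*F1*F2 + 2*F3)/6))
      ≤ (p:ℚ)^(-7:ℤ) := le_trans htr (pnorm_zpow_mono (by norm_num))
  rw [hH, hP3, hCfull]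
  have keyD : PG - (1 + 2*(p:ℚ)*((p:ℚ)*s1) + 2*(p:ℚ)^3/3*((p:ℚ)^3*s3 - 3*(p:ℚ)*s2))
      = (PG - (1 + F1 + (F1^2 - F2)/2 + (F1^3 - 3*F1*F2 + 2*F3)/6))
        + (2*(p:ℚ)^4*s1*s1 + (4/3)*(p:ℚ)^6*(s1*s1)*s1
           - 4*(p:ℚ)^6*s1*s2 + 2*(p:ℚ)^6*s3*1) := by
    rw [hF1eq, hF2eq, hF3eq]
    ring
  rw [keyD, show (-(7:ℕ):ℤ) = (-7:ℤ) by norm_num]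
  exact pnorm_add_le hE7 hD
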